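/- Let k ≥ 2, n = 4k, and let H ≤ Sym_n be the regular Cayley representation of Q_{4k}. Let i, j be integers with 1 ≤ i, j ≤ n/2, and let σ, τ ∈ H. Suppose σ(j + m) = τ(i + m) for all m with 0 ≤ m ≤ n/2. Then i = j and σ = τ. -/

import Mathlib

/-- The position in `{1, ..., 4*k}` of an element of the generalized quaternion group
`Q_{4k}`, under the identification `t^i ↔ i+1` and `t^i * u ↔ i + 2k + 1`
(for `0 ≤ i ≤ 2k-1`), where `t = QuaternionGroup.a 1` and `u = QuaternionGroup.xa 0`.
Note `QuaternionGroup.xa j = u * t^j = t^(-j) * u`. -/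
def qpos (k : ℕ) : QuaternionGroup k → ℕ
  | .a i => i.val + 1
  | .xa i => (-i).val + 2 * k + 1

/-- The element of `Q_{4k}` at position `p ∈ {1, ..., 4*k}`. -/
def qofpos (k : ℕ) (p : ℕ) : QuaternionGroup k :=
  if p ≤ 2 * k then .a ((p - 1 : ℕ) : ZMod (2 * k))
  else .xa (-((p - 2 * k - 1 : ℕ) : ZMod (2 * k)))

/-- The Cayley (left regular) representation of `Q_{4k}` as permutations of the
positions `{1, ..., 4*k}`: the element at position `p` is sent, by `g`, to the
position of `g * (element at position p)`. -/
def qact (k : ℕ) (g : QuaternionGroup k) (p : ℕ) : ℕ :=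
  qpos k (g * qofpos k p)

lemma qpos_bounds (k : ℕ) (hk : 2 ≤ k) (x : QuaternionGroup k) :
    1 ≤ qpos k x ∧ qpos k x ≤ 4 * k := by
  haveI : NeZero (2 * k) := ⟨by omega⟩
  cases x with
  | a i => have := i.val_lt; simp only [qpos]; omega
  | xa i => have := (-i).val_lt; simp only [qpos]; omega

/-- The generator `x_{σ(p)}` (as an element of `Fin (4*k)`, `0`-indexed) of the free
monoid, where `σ` is the permutation of `{1, ..., 4*k}` given by `g ∈ H`. -/
def qletter (k : ℕ) (hk : 2 ≤ k) (g : QuaternionGroup k) (p : ℕ) : Fin (4 * k) :=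
  ⟨qact k g p - 1, by
    have h := qpos_bounds k hk (g * qofpos k p)
    simp only [qact]; omega⟩

/-- The word `x_{σ(a)} x_{σ(a+1)} ⋯ x_{σ(a+len-1)}` in the free monoid on
`x_1, ..., x_n` (letters indexed by `Fin (4*k)`, `0`-indexed). -/
def segWord (k : ℕ) (hk : 2 ≤ k) (g : QuaternionGroup k) (a len : ℕ) :
    FreeMonoid (Fin (4 * k)) :=
  FreeMonoid.ofList ((List.range' a len).map (qletter k hk g))

/-- The word `x_1 x_2 ⋯ x_n`. -/
def baseWord (k : ℕ) : FreeMonoid (Fin (4 * k)) :=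
  FreeMonoid.ofList (List.ofFn (fun m : Fin (4 * k) => m))

/-- The defining relations `x_1 ⋯ x_n = x_{σ(1)} ⋯ x_{σ(n)}`, `σ ∈ H`. -/
def qrel (k : ℕ) (hk : 2 ≤ k) (w v : FreeMonoid (Fin (4 * k))) : Prop :=
  w = baseWord k ∧ ∃ g : QuaternionGroup k, v = segWord k hk g 1 (4 * k)

/-- The congruence on the free monoid generated by the defining relations. -/
def qcon (k : ℕ) (hk : 2 ≤ k) : Con (FreeMonoid (Fin (4 * k))) :=
  conGen (qrel k hk)

/-- The monoid `S_n(H) = ⟨a_1, ..., a_n ∣ a_1 ⋯ a_n = a_{σ(1)} ⋯ a_{σ(n)}, σ ∈ H⟩`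
where `n = 4k` and `H` is the regular Cayley representation of `Q_{4k}` in `Sym_n`. -/
abbrev Smon (k : ℕ) (hk : 2 ≤ k) : Type := (qcon k hk).Quotient

/-- `g` is of `a`-type. -/
def qisA {k : ℕ} : QuaternionGroup k → Prop
  | .a _ => True
  | .xa _ => False

lemma qpos_inj (k : ℕ) (hk : 2 ≤ k) : Function.Injective (qpos k) := by
  haveI : NeZero (2 * k) := ⟨by omega⟩
  rintro (i | i) (j | j) h <;> simp only [qpos] at h
  · exact congrArg _ (ZMod.val_injective _ (by omega))
  · have := i.val_lt; omega
  · have := j.val_lt; omega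
  · have : -i = -j := ZMod.val_injective _ (by omega)
    exact congrArg QuaternionGroup.xa (neg_injective this)

lemma qhalf (k : ℕ) (hk : 2 ≤ k) (g : QuaternionGroup k) (p : ℕ) :
    (qact k g p ≤ 2 * k) ↔ ((p ≤ 2 * k) ↔ qisA g) := by
  haveI : NeZero (2 * k) := ⟨by omega⟩
  unfold qact qofpos
  by_cases hp : p ≤ 2 * k <;> cases g with
  | a s =>
      simp only [hp, if_pos, if_neg, QuaternionGroup.a_mul_a, QuaternionGroup.a_mul_xa,
        qpos, qisA]
      first
      | (have := (s + ((p - 1 : ℕ) : ZMod (2 * k))).val_lt; simp [hp]; omega)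
      | (simp [hp]; omega)
      | simp [hp]
  | xa s =>
      simp only [hp, if_pos, if_neg, QuaternionGroup.xa_mul_a, QuaternionGroup.xa_mul_xa,
        qpos, qisA]
      first
      | (simp [hp]; omega)
      | (have := ((k : ZMod (2*k)) + -((p - 2*k - 1 : ℕ) : ZMod (2 * k)) - s).val_lt;
          simp [hp]; omega)
      | simp [hp]

/-- if `1 ≤ i, j ≤ n/2` and `σ(j+m) = τ(i+m)` for all `0 ≤ m ≤ n/2`,
then `i = j` and `σ = τ`. -/
theorem stmt5 (k : ℕ) (hk : 2 ≤ k) (g h : QuaternionGroup k) (i j : ℕ)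
    (hi1 : 1 ≤ i) (hi2 : i ≤ 2 * k) (hj1 : 1 ≤ j) (hj2 : j ≤ 2 * k)
    (heq : ∀ m, m ≤ 2 * k → qact k g (j + m) = qact k h (i + m)) :
    i = j ∧ qact k g = qact k h := by
  haveI : NeZero (2 * k) := ⟨by omega⟩
  have key : ∀ m, m ≤ 2 * k → (((j + m ≤ 2 * k) ↔ qisA g) ↔ ((i + m ≤ 2 * k) ↔ qisA h)) := by
    intro m hm
    rw [← qhalf k hk g (j + m), ← qhalf k hk h (i + m), heq m hm]
  have hij : i = j := by
    have h1 := key (2 * k - j) (by omega)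
    have h2 := key (2 * k - j + 1) (by omega)
    have e1 : j + (2 * k - j) ≤ 2 * k := by omega
    have e2 : ¬ (j + (2 * k - j + 1) ≤ 2 * k) := by omega
    by_cases hle : i ≤ j
    · by_cases hlt : i < j
      · have b1 : i + (2 * k - j) ≤ 2 * k := by omega
        have b2 : i + (2 * k - j + 1) ≤ 2 * k := by omega
        rw [iff_true_intro e1, iff_true_intro b1] at h1
        rw [iff_false_intro e2, iff_true_intro b2] at h2
        tauto
      · omega
    · have b1 : ¬ (i + (2 * k - j) ≤ 2 * k) := by omega
      have b2 : ¬ (i + (2 * k - j + 1) ≤ 2 * k) := by omega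
      rw [iff_true_intro e1, iff_false_intro b1] at h1
      rw [iff_false_intro e2, iff_false_intro b2] at h2
      tauto
  refine ⟨hij, ?_⟩
  have h0 := heq 0 (by omega)
  rw [hij] at h0
  simp only [Nat.add_zero, qact] at h0
  have hgh : g = h := mul_right_cancel (qpos_inj k hk h0)
  rw [hgh]
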